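/- Let B be an exact Krull–Schmidt Frobenius k-category whose stable category B̄ has finite-dimensional Hom-spaces, and let C be a functorially finite maximal (d−1)-orthogonal subcategory with d ≥ 2 and C̄[d] = C̄. Then for every M ∈ mod-C̄ there is an isomorphism Tor^C_{d+1}(M, C̄) ≅ Ω^{d+2}_{C̄}(M) in the stable category of mod-C̄, natural in M, where Ω_{C̄} is the syzygy functor of mod-C̄. -/

import Mathlib

open CategoryTheory CategoryTheory.Limits

universe v u

/-- Bundled data of an exact Krull–Schmidt Frobenius `k`-category: an additive
`k`-linear category equipped with a class of admissible short exact sequences,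
a class of projective(-injective) objects satisfying the usual lifting
properties on both sides (the Frobenius property), chosen projective covers
with syzygies and injective envelopes with cosyzygies (enough projectives and
enough injectives), the Krull--Schmidt property, and Hom-finiteness of the
stable category (Hom's modulo maps factoring through projectives). -/
structure FrobeniusSetup (k : Type) [Field k] (B : Type u) [Category.{v} B] [Preadditive B]
    [CategoryTheory.Linear k B] [HasFiniteBiproducts B] [HasBinaryBiproducts B] : Type (max u v) where
  /-- the admissible short exact sequences `0 → X → Y → Z → 0` of the exact structure -/
  IsSES : ∀ {X Y Z : B}, (X ⟶ Y) → (Y ⟶ Z) → Prop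
  /-- the projective (equivalently injective) objects -/
  Proj : B → Prop
  ses_zero : ∀ {X Y Z : B} (f : X ⟶ Y) (g : Y ⟶ Z), IsSES f g → f ≫ g = 0
  /-- in an admissible short exact sequence, `f` is a kernel of `g` -/
  ses_ker : ∀ {X Y Z : B} (f : X ⟶ Y) (g : Y ⟶ Z), IsSES f g →
      ∀ {W : B} (u : W ⟶ Y), u ≫ g = 0 → ∃! v : W ⟶ X, v ≫ f = u
  /-- in an admissible short exact sequence, `g` is a cokernel of `f` -/
  ses_coker : ∀ {X Y Z : B} (f : X ⟶ Y) (g : Y ⟶ Z), IsSES f g →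
      ∀ {W : B} (u : Y ⟶ W), f ≫ u = 0 → ∃! v : Z ⟶ W, g ≫ v = u
  /-- admissible short exact sequences are closed under isomorphism -/
  ses_iso : ∀ {X Y Z X' Y' Z' : B} (f : X ⟶ Y) (g : Y ⟶ Z)
      (iX : X ≅ X') (iY : Y ≅ Y') (iZ : Z ≅ Z') (f' : X' ⟶ Y') (g' : Y' ⟶ Z'),
      IsSES f g → f ≫ iY.hom = iX.hom ≫ f' → g ≫ iZ.hom = iY.hom ≫ g' → IsSES f' g'
  /-- split exact sequences are admissible -/
  ses_split : ∀ X Y : B, IsSES (biprod.inl : X ⟶ X ⊞ Y) (biprod.snd : X ⊞ Y ⟶ Y)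
  /-- the `Proj` objects are precisely the projective objects of the exact structure -/
  proj_iff : ∀ P : B, Proj P ↔
      (∀ {X Y Z : B} (f : X ⟶ Y) (g : Y ⟶ Z), IsSES f g →
        ∀ h : P ⟶ Z, ∃ l : P ⟶ Y, l ≫ g = h)
  /-- the Frobenius property: `Proj` objects are precisely the injective objects -/
  inj_iff : ∀ P : B, Proj P ↔
      (∀ {X Y Z : B} (f : X ⟶ Y) (g : Y ⟶ Z), IsSES f g →
        ∀ h : X ⟶ P, ∃ l : Y ⟶ P, f ≫ l = h)
  /-- a chosen projective cover (enough projectives) -/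
  P : B → B
  projP : ∀ X : B, Proj (P X)
  pr : ∀ X : B, P X ⟶ X
  /-- the chosen syzygy -/
  syz : B → B
  syzMono : ∀ X : B, syz X ⟶ P X
  ses_syz : ∀ X : B, IsSES (syzMono X) (pr X)
  /-- a chosen injective envelope (enough injectives) -/
  I : B → B
  projI : ∀ X : B, Proj (I X)
  en : ∀ X : B, X ⟶ I X
  /-- the chosen cosyzygy, i.e. the suspension of the stable category -/
  cosyz : B → B
  cosyzEpi : ∀ X : B, I X ⟶ cosyz X
  ses_cosyz : ∀ X : B, IsSES (en X) (cosyzEpi X)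
  /-- the Krull–Schmidt property: every object is a finite biproduct of objects
  with local endomorphism rings -/
  krullSchmidt : ∀ X : B, ∃ (n : ℕ) (Y : Fin n → B),
      (∀ i, IsLocalRing (End (Y i))) ∧ Nonempty (X ≅ ⨁ Y)
  /-- Hom-finiteness of the stable category -/
  homFinite : ∀ X Y : B, FiniteDimensional k
      ((X ⟶ Y) ⧸ Submodule.span k
        {f : X ⟶ Y | ∃ (Q : B) (g : X ⟶ Q) (h : Q ⟶ Y), Proj Q ∧ f = g ≫ h})

namespace FrobeniusSetup

variable {k : Type} [Field k] {B : Type u} [Category.{v} B] [Preadditive B]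
  [CategoryTheory.Linear k B] [HasFiniteBiproducts B] [HasBinaryBiproducts B] (S : FrobeniusSetup k B)

/-- The ideal of maps factoring through a projective object. -/
def projIdeal (X Y : B) : Submodule k (X ⟶ Y) :=
  Submodule.span k {f : X ⟶ Y | ∃ (Q : B) (g : X ⟶ Q) (h : Q ⟶ Y), S.Proj Q ∧ f = g ≫ h}

/-- Stable Hom: morphisms in the stable category `B̄`. -/
def sHom (X Y : B) : Type v := (X ⟶ Y) ⧸ S.projIdeal X Y

noncomputable instance (X Y : B) : AddCommGroup (S.sHom X Y) :=
  inferInstanceAs (AddCommGroup ((X ⟶ Y) ⧸ S.projIdeal X Y))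

noncomputable instance (X Y : B) : Module k (S.sHom X Y) :=
  inferInstanceAs (Module k ((X ⟶ Y) ⧸ S.projIdeal X Y))

/-- The class of a morphism in the stable category. -/
def sMk {X Y : B} (f : X ⟶ Y) : S.sHom X Y := Submodule.Quotient.mk f

/-- Vanishing of the stable Hom-space `B̄(X,Y)`. -/
def sVanish (X Y : B) : Prop := S.projIdeal X Y = ⊤

/-- `X` and `Y` are isomorphic in the stable category `B̄`. -/
def StIso (X Y : B) : Prop :=
  ∃ (f : X ⟶ Y) (g : Y ⟶ X),
    f ≫ g - 𝟙 X ∈ S.projIdeal X X ∧ g ≫ f - 𝟙 Y ∈ S.projIdeal Y Y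

/-- The shift (suspension) `X[n]` in the stable category: iterated cosyzygies for
`n ≥ 0` and iterated syzygies for `n < 0`. -/
def shift : ℤ → B → B
  | Int.ofNat n, X => S.cosyz^[n] X
  | Int.negSucc n, X => S.syz^[n + 1] X

/-- `Ext^i_B(X,Y) = 0`, expressed via the standard identification
`Ext^i(X,Y) ≅ B̄(Ω^i X, Y)` for `i ≥ 1` valid in a Frobenius category. -/
def extVanish (i : ℕ) (X Y : B) : Prop := S.sVanish (S.syz^[i] X) Y

/-- `C` is a maximal `(d-1)`-orthogonal subcategory of `B`. -/
def MaxOrthogonal (C : Set B) (d : ℕ) : Prop :=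
  (∀ X : B, X ∈ C ↔ ∀ i : ℕ, 1 ≤ i → i < d → ∀ C₀ ∈ C, S.extVanish i X C₀) ∧
  (∀ Y : B, Y ∈ C ↔ ∀ i : ℕ, 1 ≤ i → i < d → ∀ C₀ ∈ C, S.extVanish i C₀ Y)

/-- `C` is functorially finite in `B`: every object admits a right and a left
`C`-approximation. -/
def FunctoriallyFinite (_S : FrobeniusSetup k B) (C : Set B) : Prop :=
  (∀ X : B, ∃ C₀ ∈ C, ∃ f : C₀ ⟶ X, ∀ C₁ ∈ C, ∀ g : C₁ ⟶ X, ∃ h : C₁ ⟶ C₀, h ≫ f = g) ∧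
  (∀ X : B, ∃ C₀ ∈ C, ∃ f : X ⟶ C₀, ∀ C₁ ∈ C, ∀ g : X ⟶ C₁, ∃ h : C₀ ⟶ C₁, f ≫ h = g)

/-- The subcategory `E_j = {X | B̄(C, X[i]) = 0 for 1 ≤ i ≤ d-1, i ≠ j}`. -/
def Esub (C : Set B) (d j : ℕ) : Set B :=
  {X : B | ∀ i : ℕ, 1 ≤ i → i ≤ d - 1 → i ≠ j → ∀ C₀ ∈ C, S.sVanish C₀ (S.cosyz^[i] X)}

/-- `C̄[d] = C̄`: the `d`-th syzygy of every object of `C` again lies in `C`,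
up to stable isomorphism (i.e. up to projective summands). -/
def ShiftStable (C : Set B) (d : ℕ) : Prop :=
  ∀ C₀ ∈ C, ∃ C₁ ∈ C, S.StIso (S.syz^[d] C₀) C₁

end FrobeniusSetup
namespace FrobeniusSetup

section FunctorCats

variable {k : Type} [Field k] {B : Type u} [Category.{v} B] [Preadditive B]
  [CategoryTheory.Linear k B] [HasFiniteBiproducts B] [HasBinaryBiproducts B]
  (S : FrobeniusSetup k B)

/-- Postcomposition on stable Hom's. -/
noncomputable def sComp (X : B) {Y Z : B} (w : Y ⟶ Z) : S.sHom X Y →ₗ[k] S.sHom X Z :=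
  Submodule.mapQ _ _ (Linear.rightComp k X w) (by
    simp only [projIdeal, Submodule.span_le]
    rintro f ⟨Q, g, h, hQ, rfl⟩
    exact Submodule.mem_comap.2 (Submodule.subset_span ⟨Q, g, h ≫ w, hQ, by simp⟩))

/-- Precomposition on stable Hom's. -/
noncomputable def sPre {W X : B} (u : W ⟶ X) (Y : B) : S.sHom X Y →ₗ[k] S.sHom W Y :=
  Submodule.mapQ _ _ (Linear.leftComp k Y u) (by
    simp only [projIdeal, Submodule.span_le]
    rintro f ⟨Q, g, h, hQ, rfl⟩
    exact Submodule.mem_comap.2 (Submodule.subset_span ⟨Q, u ≫ g, h, hQ, by simp⟩))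

@[simp] lemma sComp_mk (X : B) {Y Z : B} (w : Y ⟶ Z) (f : X ⟶ Y) :
    S.sComp X w (S.sMk f) = S.sMk (f ≫ w) := rfl

@[simp] lemma sPre_mk {W X : B} (u : W ⟶ X) (Y : B) (f : X ⟶ Y) :
    S.sPre u Y (S.sMk f) = S.sMk (u ≫ f) := rfl

variable (CC : Set B)

/-- The restriction to `C` of the representable functor `B(-,X)`; for `X ∈ C`
these are exactly the projective objects of `mod-C`. -/
def LinRep (X : B) : (ObjectProperty.FullSubcategory (· ∈ CC))ᵒᵖ ⥤ ModuleCat k :=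
  (ObjectProperty.ι (· ∈ CC)).op ⋙ (linearYoneda k B).obj X

/-- The natural transformation `B(-,X) ⟶ B(-,Y)` induced by `w : X ⟶ Y`. -/
def lMap {X Y : B} (w : X ⟶ Y) : LinRep (k := k) CC X ⟶ LinRep CC Y :=
  CategoryTheory.Functor.whiskerLeft (ObjectProperty.ι (· ∈ CC)).op
    ((linearYoneda k B).map w)

/-- The restriction to `C̄` of the stable representable functor `B̄(-,X)`. -/
noncomputable def SRep (X : B) : (ObjectProperty.FullSubcategory (· ∈ CC))ᵒᵖ ⥤ ModuleCat k where
  obj c := ModuleCat.of k (S.sHom c.unop.obj X)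
  map {c c'} u := ModuleCat.ofHom (S.sPre (u.unop.hom : c'.unop.obj ⟶ c.unop.obj) X)
  map_id c := by
    ext x
    obtain ⟨f, rfl⟩ := Submodule.Quotient.mk_surjective _ x
    show S.sMk ((𝟙 c.unop.obj : c.unop.obj ⟶ c.unop.obj) ≫ f) = S.sMk f
    rw [Category.id_comp]
  map_comp {c c' c''} u v := by
    ext x
    obtain ⟨f, rfl⟩ := Submodule.Quotient.mk_surjective _ x
    show S.sMk (((v.unop.hom : c''.unop.obj ⟶ c'.unop.obj) ≫
        (u.unop.hom : c'.unop.obj ⟶ c.unop.obj)) ≫ f)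
      = S.sMk ((v.unop.hom : c''.unop.obj ⟶ c'.unop.obj) ≫
        ((u.unop.hom : c'.unop.obj ⟶ c.unop.obj) ≫ f))
    rw [Category.assoc]

/-- The natural transformation `B̄(-,X) ⟶ B̄(-,Y)` induced by `w : X ⟶ Y`. -/
noncomputable def sMap {X Y : B} (w : X ⟶ Y) : S.SRep CC X ⟶ S.SRep CC Y where
  app c := ModuleCat.ofHom (S.sComp c.unop.obj w)
  naturality {c c'} u := by
    ext x
    obtain ⟨f, rfl⟩ := Submodule.Quotient.mk_surjective _ x
    show S.sMk (((u.unop.hom : c'.unop.obj ⟶ c.unop.obj) ≫ f) ≫ w)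
      = S.sMk ((u.unop.hom : c'.unop.obj ⟶ c.unop.obj) ≫ (f ≫ w))
    rw [Category.assoc]

/-- A functor on `C` underlies a functor on the stable category `C̄` iff it kills
all maps factoring through a projective object of `B`. -/
def KillsProj (M : (ObjectProperty.FullSubcategory (· ∈ CC))ᵒᵖ ⥤ ModuleCat k) : Prop :=
  ∀ (c c' : (ObjectProperty.FullSubcategory (· ∈ CC))ᵒᵖ) (u : c ⟶ c'),
    (u.unop.hom : c'.unop.obj ⟶ c.unop.obj) ∈ S.projIdeal c'.unop.obj c.unop.obj → M.map u = 0

/-- `M` is a finitely presented k-linear contravariant functor on the stable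
category `C̄`, i.e. an object of `mod-C̄`: it admits a projective presentation
`B̄(-,C₁) → B̄(-,C₀) → M → 0` by (restricted) stable representables. -/
def IsFPStable (M : (ObjectProperty.FullSubcategory (· ∈ CC))ᵒᵖ ⥤ ModuleCat k) : Prop :=
  ∃ (C₁ C₀ : B), C₁ ∈ CC ∧ C₀ ∈ CC ∧
    ∃ (φ : S.SRep CC C₁ ⟶ S.SRep CC C₀) (ε : S.SRep CC C₀ ⟶ M),
      ∀ c, Function.Surjective (ε.app c) ∧ Function.Exact (φ.app c) (ε.app c)

/-- `M` is a finitely presented k-linear contravariant functor on `C`,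
i.e. an object of `mod-C`. -/
def IsFP (M : (ObjectProperty.FullSubcategory (· ∈ CC))ᵒᵖ ⥤ ModuleCat k) : Prop :=
  ∃ (C₁ C₀ : B), C₁ ∈ CC ∧ C₀ ∈ CC ∧
    ∃ (φ : LinRep (k := k) CC C₁ ⟶ LinRep CC C₀) (ε : LinRep (k := k) CC C₀ ⟶ M),
      ∀ c, Function.Surjective (ε.app c) ∧ Function.Exact (φ.app c) (ε.app c)

end FunctorCats

end FrobeniusSetup

namespace FrobeniusSetup

section BasicLemmas

variable {k : Type} [Field k] {B : Type u} [Category.{v} B] [Preadditive B]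
  [CategoryTheory.Linear k B] [HasFiniteBiproducts B] [HasBinaryBiproducts B]
  (S : FrobeniusSetup k B)

lemma mem_projIdeal_of_factor {X Y : B} (Q : B) (a : X ⟶ Q) (b : Q ⟶ Y) (hQ : S.Proj Q) :
    a ≫ b ∈ S.projIdeal X Y :=
  Submodule.subset_span ⟨Q, a, b, hQ, rfl⟩

lemma proj_lift {Q X Y Z : B} (hQ : S.Proj Q) {f : X ⟶ Y} {gg : Y ⟶ Z} (hs : S.IsSES f gg)
    (h : Q ⟶ Z) : ∃ l : Q ⟶ Y, l ≫ gg = h := (S.proj_iff Q).1 hQ f gg hs h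

lemma proj_extend {Q X Y Z : B} (hQ : S.Proj Q) {f : X ⟶ Y} {gg : Y ⟶ Z} (hs : S.IsSES f gg)
    (h : X ⟶ Q) : ∃ l : Y ⟶ Q, f ≫ l = h := (S.inj_iff Q).1 hQ f gg hs h

lemma proj_biprod {Q Q' : B} (hQ : S.Proj Q) (hQ' : S.Proj Q') : S.Proj (Q ⊞ Q') := by
  rw [S.proj_iff]
  intro X Y Z f gg hses h
  obtain ⟨l1, hl1⟩ := S.proj_lift hQ hses (biprod.inl ≫ h)
  obtain ⟨l2, hl2⟩ := S.proj_lift hQ' hses (biprod.inr ≫ h)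
  refine ⟨biprod.desc l1 l2, ?_⟩
  apply biprod.hom_ext'
  · rw [← Category.assoc, biprod.inl_desc, hl1]
  · rw [← Category.assoc, biprod.inr_desc, hl2]

lemma mem_projIdeal_iff {X Y : B} (f : X ⟶ Y) :
    f ∈ S.projIdeal X Y ↔ ∃ (Q : B) (a : X ⟶ Q) (b : Q ⟶ Y), S.Proj Q ∧ f = a ≫ b := by
  let N : Submodule k (X ⟶ Y) :=
    { carrier := {f | ∃ (Q : B) (a : X ⟶ Q) (b : Q ⟶ Y), S.Proj Q ∧ f = a ≫ b}
      add_mem' := by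
        rintro f f' ⟨Q, a, b, hQ, rfl⟩ ⟨Q', a', b', hQ', rfl⟩
        exact ⟨Q ⊞ Q', biprod.lift a a', biprod.desc b b', S.proj_biprod hQ hQ',
          (biprod.lift_desc).symm⟩
      zero_mem' := ⟨S.P X, 0, 0, S.projP X, by simp⟩
      smul_mem' := by
        rintro r f ⟨Q, a, b, hQ, rfl⟩
        exact ⟨Q, r • a, b, hQ, (Linear.smul_comp _ _ _ _ _ _).symm⟩ }
  have hN : S.projIdeal X Y = N :=
    le_antisymm (Submodule.span_le.mpr fun x hx => hx) Submodule.subset_span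
  rw [hN]; rfl

end BasicLemmas

end FrobeniusSetup
namespace FrobeniusSetup

section BasicLemmas2

variable {k : Type} [Field k] {B : Type u} [Category.{v} B] [Preadditive B]
  [CategoryTheory.Linear k B] [HasFiniteBiproducts B] [HasBinaryBiproducts B]
  (S : FrobeniusSetup k B)

lemma projIdeal_comp_left {X Y Z : B} (u : X ⟶ Y) {f : Y ⟶ Z} (hf : f ∈ S.projIdeal Y Z) :
    u ≫ f ∈ S.projIdeal X Z := by
  obtain ⟨Q, a, b, hQ, rfl⟩ := (S.mem_projIdeal_iff f).1 hf
  rw [← Category.assoc]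
  exact S.mem_projIdeal_of_factor Q (u ≫ a) b hQ

lemma projIdeal_comp_right {X Y Z : B} {f : X ⟶ Y} (hf : f ∈ S.projIdeal X Y) (v : Y ⟶ Z) :
    f ≫ v ∈ S.projIdeal X Z := by
  obtain ⟨Q, a, b, hQ, rfl⟩ := (S.mem_projIdeal_iff f).1 hf
  rw [Category.assoc]
  exact S.mem_projIdeal_of_factor Q a (b ≫ v) hQ

lemma ses_mono_cancel {X Y Z W : B} {f : X ⟶ Y} {gg : Y ⟶ Z} (hs : S.IsSES f gg)
    {a b : W ⟶ X} (h : a ≫ f = b ≫ f) : a = b := by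
  obtain ⟨v, -, huniq⟩ := S.ses_ker f gg hs (a ≫ f)
    (by rw [Category.assoc, S.ses_zero f gg hs, comp_zero])
  rw [huniq a rfl, huniq b h.symm]

lemma ses_epi_cancel {X Y Z W : B} {f : X ⟶ Y} {gg : Y ⟶ Z} (hs : S.IsSES f gg)
    {a b : Z ⟶ W} (h : gg ≫ a = gg ≫ b) : a = b := by
  obtain ⟨v, -, huniq⟩ := S.ses_coker f gg hs (gg ≫ a)
    (by rw [← Category.assoc, S.ses_zero f gg hs, zero_comp])
  rw [huniq a rfl, huniq b h.symm]

lemma factor_through_en {X Y : B} {f : X ⟶ Y} (hf : f ∈ S.projIdeal X Y) :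
    ∃ q : S.I X ⟶ Y, f = S.en X ≫ q := by
  obtain ⟨Q, a, b, hQ, rfl⟩ := (S.mem_projIdeal_iff _).1 hf
  obtain ⟨l, hl⟩ := S.proj_extend hQ (S.ses_cosyz X) a
  exact ⟨l ≫ b, by rw [← Category.assoc, hl]⟩

lemma proj_syz {Q : B} (hQ : S.Proj Q) : S.Proj (S.syz Q) := by
  obtain ⟨s, hs⟩ := S.proj_lift hQ (S.ses_syz Q) (𝟙 Q)
  have hz : S.syzMono Q ≫ S.pr Q = 0 := S.ses_zero _ _ (S.ses_syz Q)
  have he : (𝟙 (S.P Q) - S.pr Q ≫ s) ≫ S.pr Q = 0 := by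
    rw [Preadditive.sub_comp, Category.id_comp, Category.assoc, hs, Category.comp_id, sub_self]
  obtain ⟨v, hv, -⟩ := S.ses_ker _ _ (S.ses_syz Q) _ he
  have hret : S.syzMono Q ≫ v = 𝟙 _ := by
    apply S.ses_mono_cancel (S.ses_syz Q)
    rw [Category.assoc, hv, Preadditive.comp_sub, Category.comp_id, ← Category.assoc, hz,
      zero_comp, sub_zero, Category.id_comp]
  rw [S.proj_iff]
  intro X Y Z f gg hses h
  obtain ⟨l', hl'⟩ := S.proj_lift (S.projP Q) hses (v ≫ h)
  exact ⟨S.syzMono Q ≫ l', by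
    rw [Category.assoc, hl', ← Category.assoc, hret, Category.id_comp]⟩

lemma proj_syz_iter {Q : B} (hQ : S.Proj Q) (n : ℕ) : S.Proj (S.syz^[n] Q) := by
  induction n with
  | zero => exact hQ
  | succ n ih => rw [Function.iterate_succ_apply']; exact S.proj_syz ih

lemma sVanish_iff {X Y : B} : S.sVanish X Y ↔ ∀ f : X ⟶ Y, f ∈ S.projIdeal X Y := by
  constructor
  · intro h f
    have h' : S.projIdeal X Y = ⊤ := h
    rw [h']; exact Submodule.mem_top
  · intro h
    show S.projIdeal X Y = ⊤
    exact Submodule.eq_top_iff'.2 h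

lemma sVanish_of_proj_left {X Y : B} (hX : S.Proj X) : S.sVanish X Y :=
  (S.sVanish_iff).2 fun f => by
    rw [← Category.id_comp f]; exact S.mem_projIdeal_of_factor X (𝟙 X) f hX

lemma sVanish_of_proj_right {X Y : B} (hY : S.Proj Y) : S.sVanish X Y :=
  (S.sVanish_iff).2 fun f => by
    rw [← Category.comp_id f]; exact S.mem_projIdeal_of_factor Y f (𝟙 Y) hY

lemma proj_mem_of_max {C : Set B} {d : ℕ} (hmax : S.MaxOrthogonal C d) {Q : B}
    (hQ : S.Proj Q) : Q ∈ C :=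
  (hmax.1 Q).2 fun i _ _ C₀ _ => S.sVanish_of_proj_left (S.proj_syz_iter hQ i)

lemma stIso_refl (X : B) : S.StIso X X :=
  ⟨𝟙 X, 𝟙 X, by rw [Category.comp_id, sub_self]; exact Submodule.zero_mem _,
    by rw [Category.comp_id, sub_self]; exact Submodule.zero_mem _⟩

lemma stIso_symm {X Y : B} (h : S.StIso X Y) : S.StIso Y X := by
  obtain ⟨f, f', h1, h2⟩ := h
  exact ⟨f', f, h2, h1⟩

lemma stIso_trans {X Y Z : B} (h1 : S.StIso X Y) (h2 : S.StIso Y Z) : S.StIso X Z := by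
  obtain ⟨f, f', hf, hf'⟩ := h1
  obtain ⟨g, g', hg, hg'⟩ := h2
  refine ⟨f ≫ g, g' ≫ f', ?_, ?_⟩
  · have key : (f ≫ g) ≫ g' ≫ f' - 𝟙 X = f ≫ ((g ≫ g' - 𝟙 Y) ≫ f') + (f ≫ f' - 𝟙 X) := by
      simp only [Preadditive.comp_add, Preadditive.comp_sub, Preadditive.sub_comp,
        Category.id_comp, Category.assoc]
      abel
    rw [key]
    exact Submodule.add_mem _
      (S.projIdeal_comp_left f (S.projIdeal_comp_right hg f')) hf
  · have key : (g' ≫ f') ≫ f ≫ g - 𝟙 Z = g' ≫ ((f' ≫ f - 𝟙 Y) ≫ g) + (g' ≫ g - 𝟙 Z) := by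
      simp only [Preadditive.comp_add, Preadditive.comp_sub, Preadditive.sub_comp,
        Category.id_comp, Category.assoc]
      abel
    rw [key]
    exact Submodule.add_mem _
      (S.projIdeal_comp_left g' (S.projIdeal_comp_right hf' g)) hg'

end BasicLemmas2

end FrobeniusSetup
namespace FrobeniusSetup

section ShiftCalculus

variable {k : Type} [Field k] {B : Type u} [Category.{v} B] [Preadditive B]
  [CategoryTheory.Linear k B] [HasFiniteBiproducts B] [HasBinaryBiproducts B]
  (S : FrobeniusSetup k B)

/-- Descend a morphism to cosyzygies. -/
lemma cosyz_descend {V W : B} (f : V ⟶ W) :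
    ∃ (f' : S.I V ⟶ S.I W) (F : S.cosyz V ⟶ S.cosyz W),
      S.en V ≫ f' = f ≫ S.en W ∧ S.cosyzEpi V ≫ F = f' ≫ S.cosyzEpi W := by
  obtain ⟨f', hf'⟩ := S.proj_extend (S.projI W) (S.ses_cosyz V) (f ≫ S.en W)
  obtain ⟨F, hF, -⟩ := S.ses_coker _ _ (S.ses_cosyz V) (f' ≫ S.cosyzEpi W) (by
    rw [← Category.assoc, hf', Category.assoc, S.ses_zero _ _ (S.ses_cosyz W), comp_zero])
  exact ⟨f', F, hf', hF⟩

/-- Two descents of stably equal maps are stably equal. -/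
lemma cosyz_descend_congr {V W : B} {f g : V ⟶ W} {f' g' : S.I V ⟶ S.I W}
    {F G : S.cosyz V ⟶ S.cosyz W}
    (hf' : S.en V ≫ f' = f ≫ S.en W) (hF : S.cosyzEpi V ≫ F = f' ≫ S.cosyzEpi W)
    (hg' : S.en V ≫ g' = g ≫ S.en W) (hG : S.cosyzEpi V ≫ G = g' ≫ S.cosyzEpi W)
    (hfg : f - g ∈ S.projIdeal V W) :
    F - G ∈ S.projIdeal (S.cosyz V) (S.cosyz W) := by
  obtain ⟨Q, a, b, hQ, hab⟩ := (S.mem_projIdeal_iff _).1 hfg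
  obtain ⟨a', ha'⟩ := S.proj_extend hQ (S.ses_cosyz V) a
  have h1 : S.en V ≫ (f' - g' - a' ≫ b ≫ S.en W) = 0 := by
    simp only [Preadditive.comp_sub, Category.assoc]
    rw [hf', hg', reassoc_of% ha', ← Category.assoc, ← Preadditive.sub_comp,
      ← Preadditive.sub_comp, ← hab, sub_self, zero_comp]
  obtain ⟨δ, hδ, -⟩ := S.ses_coker _ _ (S.ses_cosyz V) _ h1
  have h2 : S.cosyzEpi V ≫ (F - G) = S.cosyzEpi V ≫ (δ ≫ S.cosyzEpi W) := by
    rw [Preadditive.comp_sub, hF, hG, ← Category.assoc, hδ, Preadditive.sub_comp,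
      Preadditive.sub_comp, Category.assoc, Category.assoc,
      S.ses_zero _ _ (S.ses_cosyz W)]
    simp
  have h3 := S.ses_epi_cancel (S.ses_cosyz V) h2
  rw [h3]
  exact S.mem_projIdeal_of_factor _ δ _ (S.projI W)

lemma stIso_cosyz {V W : B} (h : S.StIso V W) : S.StIso (S.cosyz V) (S.cosyz W) := by
  obtain ⟨φ, ψ, hφψ, hψφ⟩ := h
  obtain ⟨φ', Φ, hφ', hΦ⟩ := S.cosyz_descend φ
  obtain ⟨ψ', Ψ, hψ', hΨ⟩ := S.cosyz_descend ψ
  have hcompφψ' : S.en V ≫ (φ' ≫ ψ') = (φ ≫ ψ) ≫ S.en V := by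
    rw [← Category.assoc, hφ', Category.assoc, hψ', ← Category.assoc]
  have hcompΦΨ : S.cosyzEpi V ≫ (Φ ≫ Ψ) = (φ' ≫ ψ') ≫ S.cosyzEpi V := by
    rw [← Category.assoc, hΦ, Category.assoc, hΨ, ← Category.assoc]
  have hidV' : S.en V ≫ 𝟙 (S.I V) = 𝟙 V ≫ S.en V := by
    rw [Category.comp_id, Category.id_comp]
  have hidV : S.cosyzEpi V ≫ 𝟙 (S.cosyz V) = 𝟙 (S.I V) ≫ S.cosyzEpi V := by
    rw [Category.comp_id, Category.id_comp]
  have hcompψφ' : S.en W ≫ (ψ' ≫ φ') = (ψ ≫ φ) ≫ S.en W := by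
    rw [← Category.assoc, hψ', Category.assoc, hφ', ← Category.assoc]
  have hcompΨΦ : S.cosyzEpi W ≫ (Ψ ≫ Φ) = (ψ' ≫ φ') ≫ S.cosyzEpi W := by
    rw [← Category.assoc, hΨ, Category.assoc, hΦ, ← Category.assoc]
  have hidW' : S.en W ≫ 𝟙 (S.I W) = 𝟙 W ≫ S.en W := by
    rw [Category.comp_id, Category.id_comp]
  have hidW : S.cosyzEpi W ≫ 𝟙 (S.cosyz W) = 𝟙 (S.I W) ≫ S.cosyzEpi W := by
    rw [Category.comp_id, Category.id_comp]
  exact ⟨Φ, Ψ,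
    S.cosyz_descend_congr hcompφψ' hcompΦΨ hidV' hidV hφψ,
    S.cosyz_descend_congr hcompψφ' hcompΨΦ hidW' hidW hψφ⟩

/-- The counit: `cosyz (syz V)` is stably isomorphic to `V`. -/
lemma stIso_counit (V : B) : S.StIso (S.cosyz (S.syz V)) V := by
  obtain ⟨l, hl⟩ := S.proj_extend (S.projP V) (S.ses_cosyz (S.syz V)) (S.syzMono V)
  obtain ⟨lam, hlam⟩ := S.proj_extend (S.projI (S.syz V)) (S.ses_syz V) (S.en (S.syz V))
  obtain ⟨ω, hω, -⟩ := S.ses_coker _ _ (S.ses_cosyz (S.syz V)) (l ≫ S.pr V) (by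
    rw [← Category.assoc, hl, S.ses_zero _ _ (S.ses_syz V)])
  obtain ⟨ω', hω', -⟩ := S.ses_coker _ _ (S.ses_syz V) (lam ≫ S.cosyzEpi (S.syz V)) (by
    rw [← Category.assoc, hlam, S.ses_zero _ _ (S.ses_cosyz (S.syz V))])
  refine ⟨ω, ω', ?_, ?_⟩
  · -- ω ≫ ω' - 𝟙 factors through I (syz V)
    have h1 : S.en (S.syz V) ≫ (l ≫ lam - 𝟙 (S.I (S.syz V))) = 0 := by
      rw [Preadditive.comp_sub, ← Category.assoc, hl, hlam, Category.comp_id, sub_self]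
    obtain ⟨s, hs, -⟩ := S.ses_coker _ _ (S.ses_cosyz (S.syz V)) _ h1
    have h2 : S.cosyzEpi (S.syz V) ≫ (ω ≫ ω' - 𝟙 _) =
        S.cosyzEpi (S.syz V) ≫ (s ≫ S.cosyzEpi (S.syz V)) := by
      rw [Preadditive.comp_sub, ← Category.assoc, hω, Category.assoc, hω',
        ← Category.assoc, ← Category.assoc, hs, Preadditive.sub_comp,
        Category.id_comp, Category.comp_id]
    have h3 := S.ses_epi_cancel (S.ses_cosyz (S.syz V)) h2
    rw [h3]
    exact S.mem_projIdeal_of_factor _ s _ (S.projI (S.syz V))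
  · -- ω' ≫ ω - 𝟙 factors through P V
    have h1 : S.syzMono V ≫ (lam ≫ l - 𝟙 (S.P V)) = 0 := by
      rw [Preadditive.comp_sub, ← Category.assoc, hlam, hl, Category.comp_id, sub_self]
    obtain ⟨t, ht, -⟩ := S.ses_coker _ _ (S.ses_syz V) _ h1
    have h2 : S.pr V ≫ (ω' ≫ ω - 𝟙 V) = S.pr V ≫ (t ≫ S.pr V) := by
      rw [Preadditive.comp_sub, Category.comp_id, reassoc_of% hω', hω,
        reassoc_of% ht, Preadditive.sub_comp, Category.id_comp]
      simp only [Category.assoc]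
    have h3 := S.ses_epi_cancel (S.ses_syz V) h2
    rw [h3]
    exact S.mem_projIdeal_of_factor _ t _ (S.projP V)

lemma sVanish_of_stIso_right {X V W : B} (h : S.sVanish X V) (e : S.StIso V W) :
    S.sVanish X W := by
  obtain ⟨φ, ψ, -, hψφ⟩ := e
  rw [S.sVanish_iff] at h ⊢
  intro f
  have key : f = (f ≫ ψ) ≫ φ - f ≫ (ψ ≫ φ - 𝟙 W) := by
    rw [Preadditive.comp_sub, Category.comp_id, Category.assoc, sub_sub_cancel]
  rw [key]
  exact Submodule.sub_mem _ (S.projIdeal_comp_right (h (f ≫ ψ)) φ)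
    (S.projIdeal_comp_left f hψφ)

/-- `B̄(syz U, V) = 0 → B̄(U, cosyz V) = 0`. -/
lemma sVanish_shift {U V : B} (h : S.sVanish (S.syz U) V) : S.sVanish U (S.cosyz V) := by
  rw [S.sVanish_iff] at h ⊢
  intro f
  obtain ⟨l, hl⟩ := S.proj_lift (S.projP U) (S.ses_cosyz V) (S.pr U ≫ f)
  obtain ⟨m, hm, -⟩ := S.ses_ker _ _ (S.ses_cosyz V) (S.syzMono U ≫ l) (by
    rw [Category.assoc, hl, ← Category.assoc, S.ses_zero _ _ (S.ses_syz U), zero_comp])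
  obtain ⟨Q, a, b, hQ, hab⟩ := (S.mem_projIdeal_iff m).1 (h m)
  obtain ⟨a', ha'⟩ := S.proj_extend hQ (S.ses_syz U) a
  have h1 : S.syzMono U ≫ (l - (a' ≫ b) ≫ S.en V) = 0 := by
    simp only [Preadditive.comp_sub, Category.assoc]
    rw [reassoc_of% ha', ← Category.assoc, ← hab, hm, sub_self]
  obtain ⟨n, hn, -⟩ := S.ses_coker _ _ (S.ses_syz U) _ h1
  have h2 : S.pr U ≫ (n ≫ S.cosyzEpi V) = S.pr U ≫ f := by
    rw [← Category.assoc, hn, Preadditive.sub_comp, Category.assoc,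
      S.ses_zero _ _ (S.ses_cosyz V), comp_zero, sub_zero, hl]
  have h3 := S.ses_epi_cancel (S.ses_syz U) h2
  rw [← h3]
  exact S.mem_projIdeal_of_factor _ n _ (S.projI V)

/-- `B̄(U, V) = 0 → B̄(cosyz U, cosyz V) = 0`. -/
lemma sVanish_cosyz {U V : B} (h : S.sVanish U V) : S.sVanish (S.cosyz U) (S.cosyz V) := by
  rw [S.sVanish_iff] at h ⊢
  intro f
  obtain ⟨l, hl⟩ := S.proj_lift (S.projI U) (S.ses_cosyz V) (S.cosyzEpi U ≫ f)
  obtain ⟨m, hm, -⟩ := S.ses_ker _ _ (S.ses_cosyz V) (S.en U ≫ l) (by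
    rw [Category.assoc, hl, ← Category.assoc, S.ses_zero _ _ (S.ses_cosyz U), zero_comp])
  obtain ⟨Q, a, b, hQ, hab⟩ := (S.mem_projIdeal_iff m).1 (h m)
  obtain ⟨a', ha'⟩ := S.proj_extend hQ (S.ses_cosyz U) a
  have h1 : S.en U ≫ (l - (a' ≫ b) ≫ S.en V) = 0 := by
    simp only [Preadditive.comp_sub, Category.assoc]
    rw [reassoc_of% ha', ← Category.assoc, ← hab, hm, sub_self]
  obtain ⟨n, hn, -⟩ := S.ses_coker _ _ (S.ses_cosyz U) _ h1
  have h2 : S.cosyzEpi U ≫ (n ≫ S.cosyzEpi V) = S.cosyzEpi U ≫ f := by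
    rw [← Category.assoc, hn, Preadditive.sub_comp, Category.assoc,
      S.ses_zero _ _ (S.ses_cosyz V), comp_zero, sub_zero, hl]
  have h3 := S.ses_epi_cancel (S.ses_cosyz U) h2
  rw [← h3]
  exact S.mem_projIdeal_of_factor _ n _ (S.projI V)

lemma stIso_cosyz_iter {V W : B} (h : S.StIso V W) (n : ℕ) :
    S.StIso (S.cosyz^[n] V) (S.cosyz^[n] W) := by
  induction n with
  | zero => exact h
  | succ n ih =>
    rw [Function.iterate_succ_apply', Function.iterate_succ_apply']
    exact S.stIso_cosyz ih

lemma stIso_counit_iter (V : B) (n : ℕ) : S.StIso (S.cosyz^[n] (S.syz^[n] V)) V := by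
  induction n with
  | zero => exact S.stIso_refl V
  | succ n ih =>
    have h1 : S.syz^[n + 1] V = S.syz (S.syz^[n] V) := Function.iterate_succ_apply' _ _ _
    rw [h1, Function.iterate_succ_apply]
    exact S.stIso_trans (S.stIso_cosyz_iter (S.stIso_counit (S.syz^[n] V)) n) ih

lemma sVanish_shift_iter {U V : B} (n : ℕ) (h : S.sVanish (S.syz^[n] U) V) :
    S.sVanish U (S.cosyz^[n] V) := by
  induction n generalizing V with
  | zero => exact h
  | succ n ih =>
    rw [Function.iterate_succ_apply'] at h
    have h3 := ih (S.sVanish_shift h)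
    rw [Function.iterate_succ_apply]
    exact h3

lemma sVanish_cosyz_iter {U V : B} (n : ℕ) (h : S.sVanish U V) :
    S.sVanish (S.cosyz^[n] U) (S.cosyz^[n] V) := by
  induction n with
  | zero => exact h
  | succ n ih =>
    rw [Function.iterate_succ_apply', Function.iterate_succ_apply']
    exact S.sVanish_cosyz ih

end ShiftCalculus

end FrobeniusSetup
namespace FrobeniusSetup

section KeyVanish

variable {k : Type} [Field k] {B : Type u} [Category.{v} B] [Preadditive B]
  [CategoryTheory.Linear k B] [HasFiniteBiproducts B] [HasBinaryBiproducts B]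
  (S : FrobeniusSetup k B)

/-- The key vanishing: for `c, Cj ∈ C` and `1 ≤ m < d` we have `B̄(cosyz^m c, Cj) = 0`.
This uses `C̄[d] = C̄` together with the `(d-1)`-orthogonality. -/
lemma keyVanish {C : Set B} {d : ℕ} (hmax : S.MaxOrthogonal C d) (hstab : S.ShiftStable C d)
    {c Cj : B} (hc : c ∈ C) (hCj : Cj ∈ C) {m : ℕ} (h1 : 1 ≤ m) (h2 : m < d) :
    S.sVanish (S.cosyz^[m] c) Cj := by
  obtain ⟨C₁, hC₁, hsti⟩ := hstab Cj hCj
  have e1 : S.StIso (S.cosyz^[d] (S.syz^[d] Cj)) (S.cosyz^[d] C₁) := S.stIso_cosyz_iter hsti d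
  have e2 : S.StIso (S.cosyz^[d] C₁) Cj :=
    S.stIso_trans (S.stIso_symm e1) (S.stIso_counit_iter Cj d)
  have v1 : S.sVanish (S.syz^[d - m] c) C₁ :=
    (hmax.1 c).1 hc (d - m) (by omega) (by omega) C₁ hC₁
  have v2 : S.sVanish c (S.cosyz^[d - m] C₁) := S.sVanish_shift_iter _ v1
  have v3 : S.sVanish (S.cosyz^[m] c) (S.cosyz^[m] (S.cosyz^[d - m] C₁)) :=
    S.sVanish_cosyz_iter _ v2
  have heq : S.cosyz^[m] (S.cosyz^[d - m] C₁) = S.cosyz^[d] C₁ := by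
    rw [← Function.iterate_add_apply]
    congr 1
    omega
  rw [heq] at v3
  exact S.sVanish_of_stIso_right v3 e2

end KeyVanish

end FrobeniusSetup
section KernelHelpers

universe w w'

lemma moduleCat_kernel_exact {R : Type w} [Ring R] {M N : ModuleCat.{w'} R} (φ : M ⟶ N) :
    Function.Exact (kernel.ι φ) φ := by
  intro y
  constructor
  · intro hy
    refine ⟨(ModuleCat.kernelIsoKer φ).inv ⟨y, LinearMap.mem_ker.2 hy⟩, ?_⟩
    exact ModuleCat.kernelIsoKer_inv_kernel_ι_apply φ ⟨y, LinearMap.mem_ker.2 hy⟩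
  · rintro ⟨x, rfl⟩
    have h := ConcreteCategory.congr_hom (kernel.condition φ) x
    exact h

end KernelHelpers

open FrobeniusSetup in
/-- Theorem 2.5(4).  For every `M ∈ mod-C̄` there is an
isomorphism `Tor^C_{d+1}(M,C̄) ≅ Ω^{d+2}_{C̄}(M)` in the stable category of
`mod-C̄`.  Here `Tor^C_{d+1}(M,C̄)` is computed from a projective resolution of
`M` in `mod-C` as in Theorem 2.5(1) as the kernel of the induced map
`B̄(-,C_{d+1}) → B̄(-,C_d)`; the statement is formalized by exhibiting this
kernel as a `(d+2)`-nd syzygy of `M` in `mod-C̄`: it fits into an exact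
sequence `0 → Tor^C_{d+1}(M,C̄) → B̄(-,D_{d+1}) → ⋯ → B̄(-,D₀) → M → 0` of
functors on `C̄` with all `D_i ∈ C` (these are the projectives of `mod-C̄`),
which is precisely the assertion `Tor^C_{d+1}(M,C̄) ≅ Ω^{d+2}_{C̄}(M)` in
`mod-C̄` modulo projectives. -/
theorem stmt10_tor_is_syzygy
    {k : Type} [Field k] {B : Type u} [Category.{v} B] [Preadditive B]
    [CategoryTheory.Linear k B] [HasFiniteBiproducts B] [HasBinaryBiproducts B]
    (S : FrobeniusSetup k B) (d : ℕ) (hd : 2 ≤ d) (C : Set B)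
    (hff : S.FunctoriallyFinite C) (hmax : S.MaxOrthogonal C d)
    (hstab : S.ShiftStable C d)
    (M : (ObjectProperty.FullSubcategory (· ∈ C))ᵒᵖ ⥤ ModuleCat k) (hM : S.IsFPStable C M)
    (Cobj : ℕ → B) (hC : ∀ i, i ≤ d + 1 → Cobj i ∈ C)
    (g : ∀ i : ℕ, Cobj (i + 1) ⟶ Cobj i) (ε : LinRep (k := k) C (Cobj 0) ⟶ M)
    (hres : ∀ c, Function.Surjective (ε.app c) ∧
      Function.Exact ((lMap (k := k) C (g 0)).app c) (ε.app c) ∧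
      (∀ i, i < d → Function.Exact ((lMap (k := k) C (g (i + 1))).app c)
        ((lMap (k := k) C (g i)).app c)) ∧
      Function.Injective ((lMap (k := k) C (g d)).app c)) :
    ∃ (D : ℕ → B), (∀ i, i ≤ d + 1 → D i ∈ C) ∧
      ∃ (h : ∀ i : ℕ, D (i + 1) ⟶ D i) (ε' : S.SRep C (D 0) ⟶ M)
        (β : kernel (S.sMap C (g d)) ⟶ S.SRep C (D (d + 1))),
        ∀ c, Function.Injective (β.app c) ∧
          Function.Exact (β.app c) ((S.sMap C (h d)).app c) ∧
          (∀ i, i < d → Function.Exact ((S.sMap C (h (i + 1))).app c)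
            ((S.sMap C (h i)).app c)) ∧
          Function.Exact ((S.sMap C (h 0)).app c) (ε'.app c) ∧
          Function.Surjective (ε'.app c) := by
  classical
  -- membership of injectives in C
  have hIC : ∀ X : B, S.I X ∈ C := fun X => S.proj_mem_of_max hmax (S.projI X)
  -- the complex property g_{i+1} ≫ g_i = 0
  have hgg : ∀ i, i < d → g (i + 1) ≫ g i = 0 := by
    intro i hi
    have hobj : Cobj (i + 2) ∈ C := hC (i + 2) (by omega)
    have hex := (hres (Opposite.op ⟨Cobj (i + 2), hobj⟩)).2.2.1 i hi
    have h0 := hex.apply_apply_eq_zero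
      (show Cobj (i + 2) ⟶ Cobj (i + 2) from 𝟙 (Cobj (i + 2)))
    have h0' : (𝟙 (Cobj (i + 2)) ≫ g (i + 1)) ≫ g i = 0 := h0
    rwa [Category.id_comp] at h0'
  -- digested exactness statements
  have hex0 : ∀ (X : B) (hX : X ∈ C) (w : X ⟶ Cobj 0),
      ε.app (Opposite.op ⟨X, hX⟩) w = 0 → ∃ e : X ⟶ Cobj 1, e ≫ g 0 = w := by
    intro X hX w hw
    obtain ⟨e, he⟩ := ((hres (Opposite.op ⟨X, hX⟩)).2.1 w).mp hw
    exact ⟨e, he⟩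
  have hexi : ∀ (X : B) (hX : X ∈ C) (i : ℕ), i < d → ∀ w : X ⟶ Cobj (i + 1),
      w ≫ g i = 0 → ∃ e : X ⟶ Cobj (i + 2), e ≫ g (i + 1) = w := by
    intro X hX i hi w hw
    obtain ⟨e, he⟩ := (((hres (Opposite.op ⟨X, hX⟩)).2.2.1 i hi) w).mp hw
    exact ⟨e, he⟩
  -- M kills the projective ideal
  obtain ⟨CC₁, CC₀, hCC₁, hCC₀, φp, εp, hpres⟩ := hM
  have hMkill : ∀ (cq cc : (ObjectProperty.FullSubcategory (· ∈ C))ᵒᵖ) (uu : cq ⟶ cc),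
      (uu.unop.hom : cc.unop.obj ⟶ cq.unop.obj) ∈ S.projIdeal cc.unop.obj cq.unop.obj →
      ∀ x : M.obj cq, M.map uu x = 0 := by
    intro cq cc uu hu x
    obtain ⟨y, rfl⟩ := (hpres cq).1 x
    obtain ⟨f0, rfl⟩ := Submodule.Quotient.mk_surjective _ y
    have hnat := εp.naturality uu
    have happ : M.map uu (εp.app cq (Submodule.Quotient.mk f0)) =
        εp.app cc ((S.SRep C CC₀).map uu (Submodule.Quotient.mk f0)) :=
      (ConcreteCategory.congr_hom hnat (Submodule.Quotient.mk f0)).symm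
    rw [happ]
    have hz : (S.SRep C CC₀).map uu (Submodule.Quotient.mk f0) = 0 := by
      show S.sMk ((uu.unop.hom : cc.unop.obj ⟶ cq.unop.obj) ≫ f0) = 0
      exact (Submodule.Quotient.mk_eq_zero _).2 (S.projIdeal_comp_right hu f0)
    rw [hz, map_zero]
  -- M vanishes on projectives
  have hMz : ∀ (Q : B) (hQC : Q ∈ C), S.Proj Q →
      ∀ x : M.obj (Opposite.op ⟨Q, hQC⟩), x = 0 := by
    intro Q hQC hQ x
    have hid : x = M.map (𝟙 (Opposite.op ⟨Q, hQC⟩)) x := by rw [M.map_id]; rfl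
    rw [hid]
    apply hMkill
    show 𝟙 Q ∈ S.projIdeal Q Q
    rw [← Category.comp_id (𝟙 Q)]
    exact S.mem_projIdeal_of_factor Q (𝟙 Q) (𝟙 Q) hQ
  -- ε kills the projective ideal
  have hεkill : ∀ (c : (ObjectProperty.FullSubcategory (· ∈ C))ᵒᵖ) (w : c.unop.obj ⟶ Cobj 0),
      w ∈ S.projIdeal c.unop.obj (Cobj 0) → ε.app c w = 0 := by
    intro c w hw
    obtain ⟨Q, a, b, hQ, rfl⟩ := (S.mem_projIdeal_iff w).1 hw
    have hQC : Q ∈ C := S.proj_mem_of_max hmax hQ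
    let aop : Opposite.op (⟨Q, hQC⟩ : ObjectProperty.FullSubcategory (· ∈ C)) ⟶ c :=
      (show c.unop ⟶ (⟨Q, hQC⟩ : ObjectProperty.FullSubcategory (· ∈ C)) from ObjectProperty.homMk a).op
    have hnat := ε.naturality aop
    have happ : ε.app c ((LinRep (k := k) C (Cobj 0)).map aop b) =
        M.map aop (ε.app (Opposite.op (⟨Q, hQC⟩ : ObjectProperty.FullSubcategory (· ∈ C))) b) :=
      ConcreteCategory.congr_hom hnat b
    have hb : ε.app (Opposite.op (⟨Q, hQC⟩ : ObjectProperty.FullSubcategory (· ∈ C))) b = 0 :=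
      hMz Q hQC hQ _
    have : ε.app c (a ≫ b) = M.map aop (ε.app (Opposite.op
        (⟨Q, hQC⟩ : ObjectProperty.FullSubcategory (· ∈ C))) b) := happ
    rw [this, hb, map_zero]
  -- the induced map SRep (Cobj 0) ⟶ M
  have hker : ∀ c : (ObjectProperty.FullSubcategory (· ∈ C))ᵒᵖ,
      S.projIdeal c.unop.obj (Cobj 0) ≤ LinearMap.ker (ε.app c).hom := by
    intro c w hw
    exact hεkill c w hw
  let ε' : S.SRep C (Cobj 0) ⟶ M :=
    { app := fun c => ModuleCat.ofHom (Submodule.liftQ _ (ε.app c).hom (hker c))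
      naturality := by
        intro c c' uu
        ext x
        obtain ⟨f0, rfl⟩ := Submodule.Quotient.mk_surjective _ x
        show ε.app c' ((uu.unop.hom : c'.unop.obj ⟶ c.unop.obj) ≫ f0)
          = M.map uu (ε.app c f0)
        exact ConcreteCategory.congr_hom (ε.naturality uu) f0 }
  -- the middle chase (inductive lemmas)
  have chase0 : ∀ (m : ℕ) (Z c₀ : B), c₀ ∈ C → Z = S.cosyz^[m] c₀ → 1 ≤ m → m < d →
      ∀ r : Z ⟶ Cobj 0, ∃ q : Z ⟶ Cobj 1, r = q ≫ g 0 := by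
    intro m Z c₀ hc₀ hZ hm hmd r
    have hv : S.sVanish Z (Cobj 0) := by
      rw [hZ]; exact S.keyVanish hmax hstab hc₀ (hC 0 (by omega)) hm hmd
    have hrI : r ∈ S.projIdeal Z (Cobj 0) := (S.sVanish_iff).1 hv r
    obtain ⟨q0, hq0⟩ := S.factor_through_en hrI
    have hz : ε.app (Opposite.op ⟨S.I Z, hIC Z⟩) q0 = 0 := hMz _ (hIC Z) (S.projI Z) _
    obtain ⟨e, he⟩ := hex0 (S.I Z) (hIC Z) q0 hz
    exact ⟨S.en Z ≫ e, by rw [hq0, ← he, ← Category.assoc]⟩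
  have chase : ∀ (s m : ℕ) (Z c₀ : B), c₀ ∈ C → Z = S.cosyz^[m] c₀ → 1 ≤ m →
      m + s + 2 ≤ d → ∀ r : Z ⟶ Cobj (s + 1), r ≫ g s = 0 →
      ∃ q : Z ⟶ Cobj (s + 2), r = q ≫ g (s + 1) := by
    intro s
    induction s with
    | zero =>
      intro m Z c₀ hc₀ hZ hm hmd r hcyc
      have hv : S.sVanish Z (Cobj 1) := by
        rw [hZ]; exact S.keyVanish hmax hstab hc₀ (hC 1 (by omega)) hm (by omega)
      have hrI : r ∈ S.projIdeal Z (Cobj 1) := (S.sVanish_iff).1 hv r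
      obtain ⟨q, hq⟩ := S.factor_through_en hrI
      have h0 : S.en Z ≫ (q ≫ g 0) = 0 := by
        rw [← Category.assoc, ← hq]; exact hcyc
      obtain ⟨ρ, hρ, -⟩ := S.ses_coker _ _ (S.ses_cosyz Z) _ h0
      obtain ⟨σ, hσ⟩ := chase0 (m + 1) (S.cosyz Z) c₀ hc₀
        (by rw [hZ]; exact (Function.iterate_succ_apply' S.cosyz m c₀).symm) (by omega) (by omega) ρ
      obtain ⟨q₁, hq₁⟩ := hexi (S.I Z) (hIC Z) 0 (by omega) (q - S.cosyzEpi Z ≫ σ) (by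
        rw [Preadditive.sub_comp, Category.assoc, ← hσ, hρ, sub_self])
      refine ⟨S.en Z ≫ q₁, ?_⟩
      have hkey : S.en Z ≫ (q₁ ≫ g 1) = r := by
        rw [hq₁, Preadditive.comp_sub, ← hq, ← Category.assoc,
          S.ses_zero _ _ (S.ses_cosyz Z), zero_comp, sub_zero]
      rw [← hkey, Category.assoc]
    | succ t IH =>
      intro m Z c₀ hc₀ hZ hm hmd r hcyc
      have hv : S.sVanish Z (Cobj (t + 2)) := by
        rw [hZ]; exact S.keyVanish hmax hstab hc₀ (hC (t + 2) (by omega)) hm (by omega)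
      have hrI : r ∈ S.projIdeal Z (Cobj (t + 2)) := (S.sVanish_iff).1 hv r
      obtain ⟨q, hq⟩ := S.factor_through_en hrI
      have h0 : S.en Z ≫ (q ≫ g (t + 1)) = 0 := by
        rw [← Category.assoc, ← hq]; exact hcyc
      obtain ⟨ρ, hρ, -⟩ := S.ses_coker _ _ (S.ses_cosyz Z) _ h0
      have hρcyc : ρ ≫ g t = 0 := by
        apply S.ses_epi_cancel (S.ses_cosyz Z)
        rw [comp_zero, ← Category.assoc, hρ, Category.assoc, hgg t (by omega), comp_zero]
      obtain ⟨σ, hσ⟩ := IH (m + 1) (S.cosyz Z) c₀ hc₀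
        (by rw [hZ]; exact (Function.iterate_succ_apply' S.cosyz m c₀).symm) (by omega) (by omega) ρ hρcyc
      obtain ⟨q₁, hq₁⟩ := hexi (S.I Z) (hIC Z) (t + 1) (by omega) (q - S.cosyzEpi Z ≫ σ) (by
        rw [Preadditive.sub_comp, Category.assoc, ← hσ, hρ, sub_self])
      refine ⟨S.en Z ≫ q₁, ?_⟩
      have hkey : S.en Z ≫ (q₁ ≫ g (t + 2)) = r := by
        rw [hq₁, Preadditive.comp_sub, ← hq, ← Category.assoc,
          S.ses_zero _ _ (S.ses_cosyz Z), zero_comp, sub_zero]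
      rw [← hkey, Category.assoc]
  -- the main middle-exactness statement
  have main_mid : ∀ (X : B) (hX : X ∈ C) (i : ℕ), i < d → ∀ f0 : X ⟶ Cobj (i + 1),
      f0 ≫ g i ∈ S.projIdeal X (Cobj i) →
      ∃ e : X ⟶ Cobj (i + 2), f0 - e ≫ g (i + 1) ∈ S.projIdeal X (Cobj (i + 1)) := by
    intro X hX i hi f0 hf
    obtain ⟨w, hw⟩ := S.factor_through_en hf
    cases i with
    | zero =>
      have hz : ε.app (Opposite.op ⟨S.I X, hIC X⟩) w = 0 := hMz _ (hIC X) (S.projI X) _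
      obtain ⟨w₁, hw₁⟩ := hex0 (S.I X) (hIC X) w hz
      have hz2 : (f0 - S.en X ≫ w₁) ≫ g 0 = 0 := by
        rw [Preadditive.sub_comp, Category.assoc, hw₁, ← hw, sub_self]
      obtain ⟨e, he⟩ := hexi X hX 0 (by omega) (f0 - S.en X ≫ w₁) hz2
      refine ⟨e, ?_⟩
      rw [he, sub_sub_cancel]
      exact S.mem_projIdeal_of_factor _ (S.en X) w₁ (S.projI X)
    | succ i' =>
      have h0 : S.en X ≫ (w ≫ g i') = 0 := by
        rw [← Category.assoc, ← hw, Category.assoc, hgg i' (by omega), comp_zero]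
      obtain ⟨ρ, hρ, -⟩ := S.ses_coker _ _ (S.ses_cosyz X) _ h0
      have hσ : ∃ σ : S.cosyz X ⟶ Cobj (i' + 1), ρ = σ ≫ g i' := by
        cases i' with
        | zero =>
          exact chase0 1 (S.cosyz X) X hX (by rw [Function.iterate_one]) (by omega)
            (by omega) ρ
        | succ t =>
          have hρcyc : ρ ≫ g t = 0 := by
            apply S.ses_epi_cancel (S.ses_cosyz X)
            rw [comp_zero, ← Category.assoc, hρ, Category.assoc,
              hgg t (by omega), comp_zero]
          exact chase t 1 (S.cosyz X) X hX (by rw [Function.iterate_one]) (by omega)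
            (by omega) ρ hρcyc
      obtain ⟨σ, hσ⟩ := hσ
      obtain ⟨w₁, hw₁⟩ := hexi (S.I X) (hIC X) i' (by omega) (w - S.cosyzEpi X ≫ σ) (by
        rw [Preadditive.sub_comp, Category.assoc, ← hσ, hρ, sub_self])
      have hz2 : (f0 - S.en X ≫ w₁) ≫ g (i' + 1) = 0 := by
        rw [Preadditive.sub_comp, Category.assoc, hw₁, Preadditive.comp_sub, ← hw,
          ← Category.assoc, S.ses_zero _ _ (S.ses_cosyz X), zero_comp, sub_zero, sub_self]
      obtain ⟨e, he⟩ := hexi X hX (i' + 1) hi (f0 - S.en X ≫ w₁) hz2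
      refine ⟨e, ?_⟩
      rw [he, sub_sub_cancel]
      exact S.mem_projIdeal_of_factor _ (S.en X) w₁ (S.projI X)
  -- assemble the answer
  refine ⟨Cobj, hC, g, ε', kernel.ι (S.sMap C (g d)), ?_⟩
  intro c
  -- kernel evaluation facts
  have kfacts : Function.Injective ((kernel.ι (S.sMap C (g d))).app c) ∧
      Function.Exact ((kernel.ι (S.sMap C (g d))).app c) ((S.sMap C (g d)).app c) := by
    set f := S.sMap C (g d) with hf
    let G := (evaluation (ObjectProperty.FullSubcategory (· ∈ C))ᵒᵖ (ModuleCat k)).obj c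
    have e1 : kernelComparison f G ≫ kernel.ι (G.map f) = G.map (kernel.ι f) :=
      kernelComparison_comp_ι _ G
    have hbij : Function.Bijective (kernelComparison f G) := by
      constructor
      · intro a b hab
        have c1 : ∀ z, (inv (kernelComparison f G)) ((kernelComparison f G) z) = z :=
          fun z => ConcreteCategory.congr_hom (IsIso.hom_inv_id (kernelComparison f G)) z
        rw [← c1 a, ← c1 b, hab]
      · intro y
        exact ⟨(inv (kernelComparison f G)) y,
          ConcreteCategory.congr_hom (IsIso.inv_hom_id (kernelComparison f G)) y⟩
    have happ : ∀ x, (kernel.ι f).app c x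
        = kernel.ι (G.map f) (kernelComparison f G x) := by
      intro x
      exact (ConcreteCategory.congr_hom e1 x).symm
    have hιinj : Function.Injective (kernel.ι (G.map f)) :=
      (ModuleCat.mono_iff_injective _).1 inferInstance
    have hkex := moduleCat_kernel_exact (G.map f)
    constructor
    · intro x y hxy
      apply hbij.1
      apply hιinj
      rw [← happ, ← happ]
      exact hxy
    · intro y
      constructor
      · intro hy
        obtain ⟨x', hx'⟩ := (hkex y).1 hy
        obtain ⟨x, hx⟩ := hbij.2 x'
        exact ⟨x, by rw [happ, hx]; exact hx'⟩
      · rintro ⟨x, rfl⟩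
        show (G.map f) ((kernel.ι f).app c x) = 0
        rw [happ]
        exact (hkex _).2 ⟨kernelComparison f G x, rfl⟩
  refine ⟨kfacts.1, kfacts.2, ?_, ?_, ?_⟩
  · -- middle exactness
    intro i hi y
    constructor
    · intro hy
      obtain ⟨f0, rfl⟩ := Submodule.Quotient.mk_surjective _ y
      have hy' : f0 ≫ g i ∈ S.projIdeal c.unop.obj (Cobj i) := by
        have hz : S.sMk (f0 ≫ g i) = 0 := hy
        exact (Submodule.Quotient.mk_eq_zero _).1 hz
      obtain ⟨e, he⟩ := main_mid c.unop.obj c.unop.property i hi f0 hy'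
      refine ⟨S.sMk e, ?_⟩
      show S.sMk (e ≫ g (i + 1)) = S.sMk f0
      have : S.sMk f0 - S.sMk (e ≫ g (i + 1)) = 0 := by
        show Submodule.Quotient.mk (f0 - e ≫ g (i + 1)) = 0
        exact (Submodule.Quotient.mk_eq_zero _).2 he
      have h2 := sub_eq_zero.1 this
      exact h2.symm
    · rintro ⟨x, rfl⟩
      obtain ⟨f0, rfl⟩ := Submodule.Quotient.mk_surjective _ x
      show S.sMk ((f0 ≫ g (i + 1)) ≫ g i) = 0
      rw [Category.assoc, hgg i hi, comp_zero]
      exact (Submodule.Quotient.mk_eq_zero _).2 (Submodule.zero_mem _)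
  · -- exactness at position 0
    intro y
    constructor
    · intro hy
      obtain ⟨f0, rfl⟩ := Submodule.Quotient.mk_surjective _ y
      have hy' : ε.app c f0 = 0 := hy
      obtain ⟨e, he⟩ := hex0 c.unop.obj c.unop.property f0 hy'
      refine ⟨S.sMk e, ?_⟩
      show S.sMk (e ≫ g 0) = S.sMk f0
      rw [he]
    · rintro ⟨x, rfl⟩
      obtain ⟨f0, rfl⟩ := Submodule.Quotient.mk_surjective _ x
      show ε.app c (f0 ≫ g 0) = 0
      exact (hres c).2.1.apply_apply_eq_zero f0
  · -- surjectivity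
    intro ym
    obtain ⟨f0, hf0⟩ := (hres c).1 ym
    exact ⟨S.sMk f0, hf0⟩
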